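/- Let C_1,…,C_u be q-ary completely regular codes of length n with covering radius 1 and the same intersection array {b_0; c_1}. Then the direct sum C = C_1 ⊕ ⋯ ⊕ C_u = {(c_1,…,c_u) : c_i ∈ C_i} has covering radius u and is completely regular with intersection numbers b(u)_i = (u−i)b_0 and c(u)_i = i·c_1 for i = 0,…,u. -/
import Mathlib

/-- Distance from a vector to a code (general finite index set). -/
noncomputable def distToCode {ι F : Type*} [Fintype ι] [DecidableEq F]
    (C : Set (ι → F)) (x : ι → F) : ℕ :=
  sInf {d | ∃ c ∈ C, hammingDist x c = d}

/-- Covering radius. -/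
noncomputable def covRad {ι F : Type*} [Fintype ι] [DecidableEq F]
    (C : Set (ι → F)) : ℕ :=
  sSup (Set.range (distToCode C))

/-- `C` is completely regular with intersection numbers `b ℓ` (neighbors one level up)
and `c ℓ` (neighbors one level down): the distance partition is equitable. -/
noncomputable def IsCRWith {ι F : Type*} [Fintype ι] [DecidableEq F]
    (C : Set (ι → F)) (b c : ℕ → ℕ) : Prop :=
  ∀ x : ι → F,
    Nat.card {y : ι → F // hammingDist x y = 1 ∧ distToCode C y = distToCode C x + 1}
      = b (distToCode C x) ∧
    Nat.card {y : ι → F // hammingDist x y = 1 ∧ distToCode C y + 1 = distToCode C x}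
      = c (distToCode C x)

section Aux

variable {ι F : Type*} [Fintype ι] [DecidableEq F]

lemma distToCode_le {C : Set (ι → F)} {c : ι → F} (x : ι → F) (hc : c ∈ C) :
    distToCode C x ≤ hammingDist x c := Nat.sInf_le ⟨c, hc, rfl⟩

lemma exists_distToCode {C : Set (ι → F)} (hC : C.Nonempty) (x : ι → F) :
    ∃ c ∈ C, hammingDist x c = distToCode C x := by
  obtain ⟨c, hc⟩ := hC
  exact Nat.sInf_mem (⟨hammingDist x c, c, hc, rfl⟩ :
    {d | ∃ c ∈ C, hammingDist x c = d}.Nonempty)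

lemma distToCode_eq_zero {C : Set (ι → F)} (hC : C.Nonempty) {x : ι → F} :
    distToCode C x = 0 ↔ x ∈ C := by
  constructor
  · intro h
    obtain ⟨c, hc, hd⟩ := exists_distToCode hC x
    rw [h, hammingDist_eq_zero] at hd
    rwa [hd]
  · intro h
    exact Nat.le_zero.mp (by simpa using distToCode_le x h)

lemma nat_card_sigma {ι : Type*} [Fintype ι] (S : ι → Type*) [∀ i, Finite (S i)] :
    Nat.card (Σ i, S i) = ∑ i, Nat.card (S i) := by
  have : ∀ i, Fintype (S i) := fun i => Fintype.ofFinite (S i)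
  simp [Nat.card_eq_fintype_card, Fintype.card_sigma]

end Aux

section Split

variable {u n : ℕ} {F : Type*} [Fintype F] [DecidableEq F]

lemma hamming_split (x y : Fin u × Fin n → F) :
    hammingDist x y = ∑ i : Fin u,
      hammingDist (fun j => x (i, j)) (fun j => y (i, j)) := by
  classical
  show (Finset.univ.filter fun p : Fin u × Fin n => x p ≠ y p).card = _
  rw [Finset.card_filter]
  rw [Fintype.sum_prod_type]
  refine Finset.sum_congr rfl fun i _ => ?_
  show _ = (Finset.univ.filter fun j : Fin n => x (i, j) ≠ y (i, j)).card
  rw [Finset.card_filter]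

lemma dist_split (C : Fin u → Set (Fin n → F)) (hne : ∀ i, (C i).Nonempty)
    (D : Set (Fin u × Fin n → F))
    (hD : D = {x | ∀ i : Fin u, (fun j => x (i, j)) ∈ C i})
    (x : Fin u × Fin n → F) :
    distToCode D x = ∑ i : Fin u, distToCode (C i) (fun j => x (i, j)) := by
  classical
  apply le_antisymm
  · choose c hc hdc using fun i => exists_distToCode (hne i) (fun j => x (i, j))
    have hmem : (fun p : Fin u × Fin n => c p.1 p.2) ∈ D := by
      rw [hD]; intro i; exact hc i
    calc distToCode D x ≤ hammingDist x (fun p : Fin u × Fin n => c p.1 p.2) :=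
          distToCode_le x hmem
      _ = ∑ i : Fin u, hammingDist (fun j => x (i, j)) (c i) := hamming_split _ _
      _ = _ := Finset.sum_congr rfl fun i _ => hdc i
  · have hDne : D.Nonempty := by
      choose c hc using fun i => hne i
      exact ⟨fun p => c p.1 p.2, by rw [hD]; intro i; exact hc i⟩
    obtain ⟨c, hc, hdc⟩ := exists_distToCode hDne x
    rw [← hdc, hamming_split]
    refine Finset.sum_le_sum fun i _ => distToCode_le _ ?_
    rw [hD] at hc; exact hc i

/-- Key counting bijection: neighbors of `x` whose distance-to-code satisfies `Q`
decompose by which row the single changed coordinate lies in. -/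
lemma key_count (C : Fin u → Set (Fin n → F)) (hne : ∀ i, (C i).Nonempty)
    (D : Set (Fin u × Fin n → F))
    (hD : D = {x | ∀ i : Fin u, (fun j => x (i, j)) ∈ C i})
    (x : Fin u × Fin n → F) (Q : ℕ → Prop) :
    Nat.card {y : Fin u × Fin n → F // hammingDist x y = 1 ∧ Q (distToCode D y)}
      = ∑ i : Fin u, Nat.card {z : Fin n → F //
          hammingDist (fun j => x (i, j)) z = 1 ∧
          Q (distToCode (C i) z +
            ∑ j ∈ Finset.univ.erase i, distToCode (C j) (fun k => x (j, k)))} := by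
  classical
  rw [← nat_card_sigma]
  refine (Nat.card_congr (Equiv.ofBijective ?_ ⟨?_, ?_⟩)).symm
  · -- the map
    refine fun p => ⟨fun q : Fin u × Fin n => if q.1 = p.1 then p.2.1 q.2 else x q, ?_, ?_⟩
    · obtain ⟨i, z, hz1, hzQ⟩ := p
      rw [hamming_split]
      rw [Finset.sum_eq_single i]
      · simpa using hz1
      · intro j _ hj
        simp only [hj, if_false]
        simp [hammingDist_eq_zero]
      · simp
    · obtain ⟨i, z, hz1, hzQ⟩ := p
      have hsplit := dist_split C hne D hD
        (fun q : Fin u × Fin n => if q.1 = i then z q.2 else x q)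
      rw [hsplit]
      have : ∑ j : Fin u, distToCode (C j)
          (fun k => if (j, k).1 = i then z (j, k).2 else x (j, k))
          = distToCode (C i) z +
            ∑ j ∈ Finset.univ.erase i, distToCode (C j) (fun k => x (j, k)) := by
        rw [← Finset.add_sum_erase _ _ (Finset.mem_univ i)]
        congr 1
        · simp
        · refine Finset.sum_congr rfl fun j hj => ?_
          have hji : j ≠ i := (Finset.mem_erase.mp hj).1
          simp [hji]
      rw [this]; exact hzQ
  · -- injective
    rintro ⟨i, z, hz1, hzQ⟩ ⟨i', z', hz1', hzQ'⟩ h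
    have hfun := congrArg Subtype.val h
    simp only at hfun
    by_cases hii : i = i'
    · subst hii
      have : z = z' := by
        funext k
        have := congrFun hfun (i, k)
        simpa using this
      subst this; rfl
    · exfalso
      have : z = fun k => x (i, k) := by
        funext k
        have := congrFun hfun (i, k)
        simpa [hii] using this
      rw [this] at hz1
      simp at hz1
  · -- surjective
    rintro ⟨y, hy1, hyQ⟩
    have hsplit := hamming_split x y
    rw [hy1] at hsplit
    -- find the unique row where x and y differ
    have hex : ∃ i : Fin u, hammingDist (fun j => x (i, j)) (fun j => y (i, j)) ≠ 0 := by
      by_contra hall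
      push_neg at hall
      simp only [hall] at hsplit
      simp at hsplit
    obtain ⟨i, hi⟩ := hex
    have hle : hammingDist (fun j => x (i, j)) (fun j => y (i, j)) ≤ 1 := by
      rw [hsplit]
      exact Finset.single_le_sum (f := fun j => hammingDist (fun k => x (j, k)) (fun k => y (j, k)))
        (fun j _ => Nat.zero_le _) (Finset.mem_univ i)
    have hi1 : hammingDist (fun j => x (i, j)) (fun j => y (i, j)) = 1 := by omega
    have hothers : ∀ j, j ≠ i → (fun k => y (j, k)) = (fun k => x (j, k)) := by
      intro j hj
      have h0 : hammingDist (fun k => x (j, k)) (fun k => y (j, k)) = 0 := by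
        have htot : (hammingDist (fun k => x (i, k)) fun k => y (i, k)) +
            ∑ j' ∈ Finset.univ.erase i,
              hammingDist (fun k => x (j', k)) (fun k => y (j', k))
            = ∑ j' : Fin u, hammingDist (fun k => x (j', k)) (fun k => y (j', k)) :=
          Finset.add_sum_erase Finset.univ
            (fun j' => hammingDist (fun k => x (j', k)) (fun k => y (j', k)))
            (Finset.mem_univ i)
        have hone : hammingDist (fun k => x (j, k)) (fun k => y (j, k)) ≤
            ∑ j' ∈ Finset.univ.erase i,
              hammingDist (fun k => x (j', k)) (fun k => y (j', k)) :=
          Finset.single_le_sum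
            (f := fun j' => hammingDist (fun k => x (j', k)) (fun k => y (j', k)))
            (fun j' _ => Nat.zero_le _)
            (Finset.mem_erase.mpr ⟨hj, Finset.mem_univ j⟩)
        omega
      exact (hammingDist_eq_zero.mp h0).symm
    refine ⟨⟨i, fun k => y (i, k), hi1, ?_⟩, ?_⟩
    · have hsplit2 := dist_split C hne D hD y
      have : ∑ j : Fin u, distToCode (C j) (fun k => y (j, k))
          = distToCode (C i) (fun k => y (i, k)) +
            ∑ j ∈ Finset.univ.erase i, distToCode (C j) (fun k => x (j, k)) := by
        rw [← Finset.add_sum_erase _ _ (Finset.mem_univ i)]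
        congr 1
        refine Finset.sum_congr rfl fun j hj => ?_
        rw [hothers j (Finset.mem_erase.mp hj).1]
      rw [hsplit2, this] at hyQ
      exact hyQ
    · ext q
      simp only
      by_cases hq : q.1 = i
      · simp only [hq, if_pos]
        obtain ⟨q1, q2⟩ := q
        simp only at hq
        subst hq
        rfl
      · simp only [hq, if_neg, if_false]
        obtain ⟨q1, q2⟩ := q
        have := congrFun (hothers q1 hq) q2
        exact this.symm

end Split

/-- Direct sum of u completely regular codes with covering radius 1 and the same
intersection array {b0; c1}: the direct sum has covering radius u and is completely
regular with b(u)_i = (u−i)·b0 and c(u)_i = i·c1. -/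
theorem stmt12 {n u b0 c1 : ℕ} (hu : 0 < u) {F : Type*} [Fintype F] [DecidableEq F]
    (C : Fin u → Set (Fin n → F))
    (hne : ∀ i, (C i).Nonempty)
    (hproper : ∀ i, C i ≠ Set.univ)
    (hcov1 : ∀ i x, distToCode (C i) x ≤ 1)
    (hCR : ∀ i, IsCRWith (C i) (fun ℓ => (1 - ℓ) * b0) (fun ℓ => ℓ * c1))
    (D : Set (Fin u × Fin n → F))
    (hD : D = {x | ∀ i : Fin u, (fun j => x (i, j)) ∈ C i}) :
    covRad D = u ∧ IsCRWith D (fun ℓ => (u - ℓ) * b0) (fun ℓ => ℓ * c1) := by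
  classical
  have hdist := dist_split C hne D hD
  have hub : ∀ x, distToCode D x ≤ u := by
    intro x
    rw [hdist x]
    calc ∑ i : Fin u, distToCode (C i) (fun j => x (i, j))
        ≤ ∑ _i : Fin u, 1 := Finset.sum_le_sum fun i _ => hcov1 i _
      _ = u := by simp
  constructor
  · -- covering radius is u
    -- witness attaining u
    have hwit : ∃ x : Fin u × Fin n → F, distToCode D x = u := by
      have : ∀ i, ∃ y : Fin n → F, y ∉ C i := by
        intro i
        by_contra h
        push_neg at h
        exact hproper i (Set.eq_univ_of_forall h)
      choose y hy using this
      refine ⟨fun p => y p.1 p.2, ?_⟩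
      rw [hdist]
      have : ∀ i : Fin u, distToCode (C i) (fun j => y i j) = 1 := by
        intro i
        have h0 : distToCode (C i) (fun j => y i j) ≠ 0 := by
          intro h
          exact hy i ((distToCode_eq_zero (hne i)).mp h)
        have := hcov1 i (fun j => y i j)
        omega
      simp [this]
    obtain ⟨x, hx⟩ := hwit
    apply le_antisymm
    · exact csSup_le ⟨_, Set.mem_range_self x⟩ (by rintro d ⟨z, rfl⟩; exact hub z)
    · exact le_csSup ⟨u, by rintro d ⟨z, rfl⟩; exact hub z⟩ ⟨x, hx⟩
  · -- complete regularity
    intro x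
    have hdx : distToCode D x = ∑ i : Fin u, distToCode (C i) (fun j => x (i, j)) := hdist x
    have hrow : ∀ i : Fin u,
        (∑ j ∈ Finset.univ.erase i, distToCode (C j) (fun k => x (j, k))) +
          distToCode (C i) (fun j => x (i, j))
        = ∑ j : Fin u, distToCode (C j) (fun k => x (j, k)) := by
      intro i
      rw [add_comm]
      exact Finset.add_sum_erase Finset.univ
        (fun j => distToCode (C j) (fun k => x (j, k))) (Finset.mem_univ i)
    have hsum1 : ∑ i : Fin u, (1 - distToCode (C i) (fun j => x (i, j))) +
        ∑ i : Fin u, distToCode (C i) (fun j => x (i, j)) = u := by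
      rw [← Finset.sum_add_distrib]
      have h1 : ∀ i ∈ Finset.univ, (1 - distToCode (C i) (fun j => x (i, j))) +
          distToCode (C i) (fun j => x (i, j)) = 1 := fun i _ => by
        have := hcov1 i (fun j => x (i, j)); omega
      rw [Finset.sum_congr rfl h1]
      simp
    constructor
    · -- b-count
      rw [key_count C hne D hD x (fun m => m = distToCode D x + 1)]
      have hstep : ∀ i : Fin u,
          Nat.card {z : Fin n → F // hammingDist (fun j => x (i, j)) z = 1 ∧
            distToCode (C i) z +
              ∑ j ∈ Finset.univ.erase i, distToCode (C j) (fun k => x (j, k))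
              = distToCode D x + 1}
          = (1 - distToCode (C i) (fun j => x (i, j))) * b0 := by
        intro i
        have heq : ∀ z : Fin n → F,
            (hammingDist (fun j => x (i, j)) z = 1 ∧
              distToCode (C i) z +
                ∑ j ∈ Finset.univ.erase i, distToCode (C j) (fun k => x (j, k))
                = distToCode D x + 1)
            ↔ (hammingDist (fun j => x (i, j)) z = 1 ∧
              distToCode (C i) z = distToCode (C i) (fun j => x (i, j)) + 1) := by
          intro z
          have h1 := hrow i
          have h2 := hdx
          constructor
          · rintro ⟨ha, hb⟩; exact ⟨ha, by omega⟩
          · rintro ⟨ha, hb⟩; exact ⟨ha, by omega⟩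
        rw [Nat.card_congr (Equiv.subtypeEquivRight heq)]
        exact (hCR i (fun j => x (i, j))).1
      rw [Finset.sum_congr rfl fun i _ => hstep i]
      show _ = (u - distToCode D x) * b0
      rw [← Finset.sum_mul, hdx]
      congr 1
      omega
    · -- c-count
      rw [key_count C hne D hD x (fun m => m + 1 = distToCode D x)]
      have hstep : ∀ i : Fin u,
          Nat.card {z : Fin n → F // hammingDist (fun j => x (i, j)) z = 1 ∧
            distToCode (C i) z +
              ∑ j ∈ Finset.univ.erase i, distToCode (C j) (fun k => x (j, k)) + 1
              = distToCode D x}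
          = distToCode (C i) (fun j => x (i, j)) * c1 := by
        intro i
        have heq : ∀ z : Fin n → F,
            (hammingDist (fun j => x (i, j)) z = 1 ∧
              distToCode (C i) z +
                ∑ j ∈ Finset.univ.erase i, distToCode (C j) (fun k => x (j, k)) + 1
                = distToCode D x)
            ↔ (hammingDist (fun j => x (i, j)) z = 1 ∧
              distToCode (C i) z + 1 = distToCode (C i) (fun j => x (i, j))) := by
          intro z
          have h1 := hrow i
          have h2 := hdx
          constructor
          · rintro ⟨ha, hb⟩; exact ⟨ha, by omega⟩
          · rintro ⟨ha, hb⟩; exact ⟨ha, by omega⟩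
        rw [Nat.card_congr (Equiv.subtypeEquivRight heq)]
        exact (hCR i (fun j => x (i, j))).2
      rw [Finset.sum_congr rfl fun i _ => hstep i]
      show _ = distToCode D x * c1
      rw [← Finset.sum_mul, hdx]
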